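/- arXiv:2104.03052 — 3 statements merged into one kernel-verified Lean document; each statement's English description precedes it below -/
import Mathlib

section
/- BIL-formulas are preserved under bi-asimulations: if (M₁,w₁) and (M₂,w₂) are pointed Θ-models and A is a bi-asimulation from (M₁,w₁) to (M₂,w₂), then every BIL(Θ)-formula true at (M₁,w₁) is true at (M₂,w₂), i.e. Th⁺_BIL(M₁,w₁) ⊆ Th⁺_BIL(M₂,w₂). -/
/-! Common vocabulary for bi-intuitionistic propositional logic (BIL),
Kripke models, bi-asimulations, abstract bi-intuitionistic logics and
bi-unravellings, following Olkhovikov & Badia,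
"Maximality of bi-intuitionistic propositional logic". -/

/-- Formulas of bi-intuitionistic propositional logic over the type `A` of
propositional letters. -/
inductive BILForm (A : Type) : Type
  | bot : BILForm A
  | atom : A → BILForm A
  | conj : BILForm A → BILForm A → BILForm A
  | disj : BILForm A → BILForm A → BILForm A
  | impl : BILForm A → BILForm A → BILForm A
  | coimpl : BILForm A → BILForm A → BILForm A

namespace BILForm

/-- The propositional letters occurring in a formula; a formula belongs to
`BIL(Θ)` iff its letters are contained in `Θ`. -/
def letters {A : Type} : BILForm A → Set A
  | bot => ∅
  | atom p => {p}
  | conj φ ψ => letters φ ∪ letters ψ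
  | disj φ ψ => letters φ ∪ letters ψ
  | impl φ ψ => letters φ ∪ letters ψ
  | coimpl φ ψ => letters φ ∪ letters ψ

end BILForm

/-- A (bi-intuitionistic) Kripke model with propositional letters `A`,
carried on the subset `dom` of the type `Ω`: a nonempty set of worlds,
partially ordered by `rel`, together with a monotone valuation. -/
structure SKModel (A : Type) (Ω : Type) : Type where
  dom : Set Ω
  nonempty : dom.Nonempty
  rel : Ω → Ω → Prop
  rel_mem : ∀ {u v}, rel u v → u ∈ dom ∧ v ∈ dom
  rel_refl : ∀ u ∈ dom, rel u u
  rel_trans : ∀ {u v w}, rel u v → rel v w → rel u w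
  rel_antisymm : ∀ {u v}, rel u v → rel v u → u = v
  val : A → Set Ω
  val_mem : ∀ p, val p ⊆ dom
  val_mono : ∀ (p : A) {u v}, rel u v → u ∈ val p → v ∈ val p

/-- Kripke satisfaction for bi-intuitionistic formulas. -/
def BILSat {A Ω : Type} (M : SKModel A Ω) : BILForm A → Ω → Prop
  | .bot, _ => False
  | .atom p, w => w ∈ M.val p
  | .conj φ ψ, w => BILSat M φ w ∧ BILSat M ψ w
  | .disj φ ψ, w => BILSat M φ w ∨ BILSat M ψ w
  | .impl φ ψ, w => ∀ v, M.rel w v → BILSat M φ v → BILSat M ψ v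
  | .coimpl φ ψ, w => ∃ v, M.rel v w ∧ BILSat M φ v ∧ ¬ BILSat M ψ v

/-- `(Γ, Δ)` is satisfied at `(M, w)`: all of `Γ` true, all of `Δ` false. -/
def BILSatTh {A Ω : Type} (M : SKModel A Ω) (w : Ω) (Γ Δ : Set (BILForm A)) : Prop :=
  (∀ φ ∈ Γ, BILSat M φ w) ∧ (∀ φ ∈ Δ, ¬ BILSat M φ w)

/-- `Th⁺_BIL(M₁,w₁) ⊆ Th⁺_BIL(M₂,w₂)` over the signature `Θ`. -/
def BILThPosSubset {A Ω₁ Ω₂ : Type} (Θ : Set A) (M₁ : SKModel A Ω₁) (w₁ : Ω₁)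
    (M₂ : SKModel A Ω₂) (w₂ : Ω₂) : Prop :=
  ∀ φ : BILForm A, φ.letters ⊆ Θ → BILSat M₁ φ w₁ → BILSat M₂ φ w₂

/-- `Th_BIL(M₁,w₁) = Th_BIL(M₂,w₂)` over the signature `Θ`. -/
def BILThEq {A Ω₁ Ω₂ : Type} (Θ : Set A) (M₁ : SKModel A Ω₁) (w₁ : Ω₁)
    (M₂ : SKModel A Ω₂) (w₂ : Ω₂) : Prop :=
  ∀ φ : BILForm A, φ.letters ⊆ Θ → (BILSat M₁ φ w₁ ↔ BILSat M₂ φ w₂)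

/-- A bi-asimulation (over the signature `Θ`) from `(M₁,w₁)` to `(M₂,w₂)`,
given by its two components `R ⊆ W₁ × W₂` and `S ⊆ W₂ × W₁`. -/
structure IsBiAsim {A Ω₁ Ω₂ : Type} (Θ : Set A) (M₁ : SKModel A Ω₁) (M₂ : SKModel A Ω₂)
    (w₁ : Ω₁) (w₂ : Ω₂) (R : Ω₁ → Ω₂ → Prop) (S : Ω₂ → Ω₁ → Prop) : Prop where
  memR : ∀ {v s}, R v s → v ∈ M₁.dom ∧ s ∈ M₂.dom
  memS : ∀ {v s}, S v s → v ∈ M₂.dom ∧ s ∈ M₁.dom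
  elem : R w₁ w₂
  atomR : ∀ p ∈ Θ, ∀ {v s}, R v s → v ∈ M₁.val p → s ∈ M₂.val p
  atomS : ∀ p ∈ Θ, ∀ {v s}, S v s → v ∈ M₂.val p → s ∈ M₁.val p
  backR : ∀ {v s t}, R v s → M₂.rel s t → ∃ u, M₁.rel v u ∧ S t u ∧ R u t
  backS : ∀ {v s t}, S v s → M₁.rel s t → ∃ u, M₂.rel v u ∧ R t u ∧ S u t
  forthR : ∀ {v s u}, R v s → M₁.rel u v → ∃ t, M₂.rel t s ∧ S t u ∧ R u t
  forthS : ∀ {v s u}, S v s → M₂.rel u v → ∃ t, M₁.rel t s ∧ R t u ∧ S u t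

/-- `M` is a submodel of `N`. -/
def Submodel {A Ω : Type} (M N : SKModel A Ω) : Prop :=
  M.dom ⊆ N.dom ∧ (∀ u ∈ M.dom, ∀ v ∈ M.dom, (M.rel u v ↔ N.rel u v)) ∧
    ∀ p, M.val p = N.val p ∩ M.dom

/-- `U` is the union of the countable chain `Mc` of models. -/
def IsUnionOfChain {A Ω : Type} (Mc : ℕ → SKModel A Ω) (U : SKModel A Ω) : Prop :=
  U.dom = ⋃ n, (Mc n).dom ∧ (∀ u v, U.rel u v ↔ ∃ n, (Mc n).rel u v) ∧
    ∀ p, U.val p = ⋃ n, (Mc n).val p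

/-- `N'` has the same frame as `N` and the same valuation on the letters in
`Θ` (this expresses both `Σ`-expansions and `Σ`-reducts). -/
def IsExpansion {A Ω : Type} (Θ : Set A) (N N' : SKModel A Ω) : Prop :=
  N'.dom = N.dom ∧ (∀ u v, N'.rel u v ↔ N.rel u v) ∧ ∀ p ∈ Θ, N'.val p = N.val p

/-- `M ≼_BIL N` over the signature `Θ`. -/
def BILElemSub {A Ω : Type} (Θ : Set A) (M N : SKModel A Ω) : Prop :=
  Submodel M N ∧ ∀ w ∈ M.dom, ∀ φ : BILForm A, φ.letters ⊆ Θ →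
    (BILSat M φ w ↔ BILSat N φ w)

/-- `(Γ,Δ)` is a successor BIL-type of `(M,v)` (over the signature `Θ`). -/
def BILSuccType {A Ω : Type} (Θ : Set A) (M : SKModel A Ω) (v : Ω)
    (Γ Δ : Set (BILForm A)) : Prop :=
  (∀ φ ∈ Γ, BILForm.letters φ ⊆ Θ) ∧ (∀ φ ∈ Δ, BILForm.letters φ ⊆ Θ) ∧
    ∀ Γ' ⊆ Γ, ∀ Δ' ⊆ Δ, Γ'.Finite → Δ'.Finite →
      ∃ u, M.rel v u ∧ BILSatTh M u Γ' Δ'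

/-- `(Γ,Δ)` is a predecessor BIL-type of `(M,v)` (over the signature `Θ`). -/
def BILPredType {A Ω : Type} (Θ : Set A) (M : SKModel A Ω) (v : Ω)
    (Γ Δ : Set (BILForm A)) : Prop :=
  (∀ φ ∈ Γ, BILForm.letters φ ⊆ Θ) ∧ (∀ φ ∈ Δ, BILForm.letters φ ⊆ Θ) ∧
    ∀ Γ' ⊆ Γ, ∀ Δ' ⊆ Δ, Γ'.Finite → Δ'.Finite →
      ∃ u, M.rel u v ∧ BILSatTh M u Γ' Δ'

/-- `M` is BIL-saturated (over the signature `Θ`): it realizes all of its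
successor and predecessor BIL-types. -/
def BILSaturated {A Ω : Type} (Θ : Set A) (M : SKModel A Ω) : Prop :=
  ∀ v ∈ M.dom, ∀ Γ Δ : Set (BILForm A),
    (BILSuccType Θ M v Γ Δ → ∃ u, M.rel v u ∧ BILSatTh M u Γ Δ) ∧
    (BILPredType Θ M v Γ Δ → ∃ u, M.rel u v ∧ BILSatTh M u Γ Δ)

/-- An isomorphism `g` of Kripke `Θ`-models from `M` onto `N`. -/
def BILIso {A Ω₁ Ω₂ : Type} (Θ : Set A) (M : SKModel A Ω₁) (N : SKModel A Ω₂)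
    (g : Ω₁ → Ω₂) : Prop :=
  Set.InjOn g M.dom ∧ g '' M.dom = N.dom ∧
  (∀ u ∈ M.dom, ∀ v ∈ M.dom, (M.rel u v ↔ N.rel (g u) (g v))) ∧
  (∀ p ∈ Θ, ∀ u ∈ M.dom, (u ∈ M.val p ↔ g u ∈ N.val p))

/-- An abstract bi-intuitionistic logic over the propositional letters `A`:
a set `In Θ` of `Θ`-formulas for every signature `Θ ⊆ A`, and a satisfaction
relation enjoying the Isomorphism, Expansion, Occurrence and Closure
properties. -/
structure AbsLogic (A : Type) : Type 1 where
  F : Type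
  In : Set A → Set F
  Sat : ∀ {Ω : Type}, SKModel A Ω → Ω → F → Prop
  in_mono : ∀ {Θ Θ' : Set A}, Θ ⊆ Θ' → In Θ ⊆ In Θ'
  iso_invariant : ∀ (Θ : Set A) {Ω₁ Ω₂ : Type} (M : SKModel A Ω₁) (N : SKModel A Ω₂)
      (g : Ω₁ → Ω₂), BILIso Θ M N g →
      ∀ φ ∈ In Θ, ∀ w ∈ M.dom, (Sat M w φ ↔ Sat N (g w) φ)
  expansion : ∀ (Θ : Set A) {Ω : Type} (M M' : SKModel A Ω), M.dom = M'.dom →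
      (∀ u v, M.rel u v ↔ M'.rel u v) → (∀ p ∈ Θ, M.val p = M'.val p) →
      ∀ φ ∈ In Θ, ∀ w, (Sat M w φ ↔ Sat M' w φ)
  occurrence : ∀ (Θ : Set A) (φ : F), φ ∈ In Θ →
      ∃ Θ₀ : Set A, Θ₀.Finite ∧ Θ₀ ⊆ Θ ∧ φ ∈ In Θ₀
  fbot : F
  fconj : F → F → F
  fdisj : F → F → F
  fimpl : F → F → F
  fcoimpl : F → F → F
  mem_bot : ∀ Θ, fbot ∈ In Θ
  mem_conj : ∀ {Θ φ ψ}, φ ∈ In Θ → ψ ∈ In Θ → fconj φ ψ ∈ In Θ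
  mem_disj : ∀ {Θ φ ψ}, φ ∈ In Θ → ψ ∈ In Θ → fdisj φ ψ ∈ In Θ
  mem_impl : ∀ {Θ φ ψ}, φ ∈ In Θ → ψ ∈ In Θ → fimpl φ ψ ∈ In Θ
  mem_coimpl : ∀ {Θ φ ψ}, φ ∈ In Θ → ψ ∈ In Θ → fcoimpl φ ψ ∈ In Θ
  sat_bot : ∀ {Ω : Type} (M : SKModel A Ω) (w : Ω), ¬ Sat M w fbot
  sat_conj : ∀ {Ω : Type} (M : SKModel A Ω) (w : Ω) (φ ψ : F),
      Sat M w (fconj φ ψ) ↔ (Sat M w φ ∧ Sat M w ψ)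
  sat_disj : ∀ {Ω : Type} (M : SKModel A Ω) (w : Ω) (φ ψ : F),
      Sat M w (fdisj φ ψ) ↔ (Sat M w φ ∨ Sat M w ψ)
  sat_impl : ∀ {Ω : Type} (M : SKModel A Ω) (w : Ω) (φ ψ : F),
      Sat M w (fimpl φ ψ) ↔ ∀ v, M.rel w v → Sat M v φ → Sat M v ψ
  sat_coimpl : ∀ {Ω : Type} (M : SKModel A Ω) (w : Ω) (φ ψ : F),
      Sat M w (fcoimpl φ ψ) ↔ ∃ v, M.rel v w ∧ Sat M v φ ∧ ¬ Sat M v ψ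

namespace AbsLogic

variable {A : Type}

/-- The `L`-theory `(Γ,Δ)` is satisfied at `(M,w)`. -/
def SatTh (L : AbsLogic A) {Ω : Type} (M : SKModel A Ω) (w : Ω) (Γ Δ : Set L.F) : Prop :=
  (∀ φ ∈ Γ, L.Sat M w φ) ∧ (∀ φ ∈ Δ, ¬ L.Sat M w φ)

/-- `Th⁺_L(M₁,w₁) ⊆ Th⁺_L(M₂,w₂)` over the signature `Θ`. -/
def ThPosSubset (L : AbsLogic A) (Θ : Set A) {Ω₁ Ω₂ : Type} (M₁ : SKModel A Ω₁) (w₁ : Ω₁)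
    (M₂ : SKModel A Ω₂) (w₂ : Ω₂) : Prop :=
  ∀ φ ∈ L.In Θ, L.Sat M₁ w₁ φ → L.Sat M₂ w₂ φ

/-- `Th_L(M₁,w₁) = Th_L(M₂,w₂)` over the signature `Θ`. -/
def ThEq (L : AbsLogic A) (Θ : Set A) {Ω₁ Ω₂ : Type} (M₁ : SKModel A Ω₁) (w₁ : Ω₁)
    (M₂ : SKModel A Ω₂) (w₂ : Ω₂) : Prop :=
  ∀ φ ∈ L.In Θ, (L.Sat M₁ w₁ φ ↔ L.Sat M₂ w₂ φ)

/-- `L` is preserved under bi-asimulations. -/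
def Preserved (L : AbsLogic A) : Prop :=
  ∀ (Θ : Set A) (Ω₁ Ω₂ : Type) (M₁ : SKModel A Ω₁) (M₂ : SKModel A Ω₂)
    (w₁ : Ω₁) (w₂ : Ω₂) (R : Ω₁ → Ω₂ → Prop) (S : Ω₂ → Ω₁ → Prop),
    IsBiAsim Θ M₁ M₂ w₁ w₂ R S → L.ThPosSubset Θ M₁ w₁ M₂ w₂

/-- `L` is ★-compact. -/
def StarCompact (L : AbsLogic A) : Prop :=
  ∀ (Θ : Set A) (Γ Δ : Set L.F), Γ ⊆ L.In Θ → Δ ⊆ L.In Θ →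
    (∀ Γ' ⊆ Γ, ∀ Δ' ⊆ Δ, Γ'.Finite → Δ'.Finite →
      ∃ (Ω : Type) (M : SKModel A Ω) (w : Ω), w ∈ M.dom ∧ L.SatTh M w Γ' Δ') →
    ∃ (Ω : Type) (M : SKModel A Ω) (w : Ω), w ∈ M.dom ∧ L.SatTh M w Γ Δ

/-- `M ≼_L N` over the signature `Θ`. -/
def ElemSub (L : AbsLogic A) (Θ : Set A) {Ω : Type} (M N : SKModel A Ω) : Prop :=
  Submodel M N ∧ ∀ w ∈ M.dom, ∀ φ ∈ L.In Θ, (L.Sat M w φ ↔ L.Sat N w φ)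

/-- `L` has the Tarski Union Property. -/
def HasTUP (L : AbsLogic A) : Prop :=
  ∀ (Θ : Set A) (Ω : Type) (Mc : ℕ → SKModel A Ω),
    (∀ n, L.ElemSub Θ (Mc n) (Mc (n + 1))) →
    ∀ U : SKModel A Ω, IsUnionOfChain Mc U → ∀ n, L.ElemSub Θ (Mc n) U

/-- `(Γ,Δ)` is a successor `L`-type of `(M,v)` (over the signature `Θ`). -/
def SuccType (L : AbsLogic A) (Θ : Set A) {Ω : Type} (M : SKModel A Ω) (v : Ω)
    (Γ Δ : Set L.F) : Prop :=
  Γ ⊆ L.In Θ ∧ Δ ⊆ L.In Θ ∧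
    ∀ Γ' ⊆ Γ, ∀ Δ' ⊆ Δ, Γ'.Finite → Δ'.Finite →
      ∃ u, M.rel v u ∧ L.SatTh M u Γ' Δ'

/-- `(Γ,Δ)` is a predecessor `L`-type of `(M,v)` (over the signature `Θ`). -/
def PredType (L : AbsLogic A) (Θ : Set A) {Ω : Type} (M : SKModel A Ω) (v : Ω)
    (Γ Δ : Set L.F) : Prop :=
  Γ ⊆ L.In Θ ∧ Δ ⊆ L.In Θ ∧
    ∀ Γ' ⊆ Γ, ∀ Δ' ⊆ Δ, Γ'.Finite → Δ'.Finite →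
      ∃ u, M.rel u v ∧ L.SatTh M u Γ' Δ'

/-- `M` is `L`-saturated (over the signature `Θ`). -/
def Saturated (L : AbsLogic A) (Θ : Set A) {Ω : Type} (M : SKModel A Ω) : Prop :=
  ∀ v ∈ M.dom, ∀ Γ Δ : Set L.F,
    (L.SuccType Θ M v Γ Δ → ∃ u, M.rel v u ∧ L.SatTh M u Γ Δ) ∧
    (L.PredType Θ M v Γ Δ → ∃ u, M.rel u v ∧ L.SatTh M u Γ Δ)

/-- An `L`-elementary embedding of `M` into `N` (over the signature `Θ`). -/
def ElemEmbedding (L : AbsLogic A) (Θ : Set A) {Ω₁ Ω₂ : Type}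
    (M : SKModel A Ω₁) (N : SKModel A Ω₂) (f : Ω₁ → Ω₂) : Prop :=
  Set.InjOn f M.dom ∧ Set.MapsTo f M.dom N.dom ∧
  (∀ u ∈ M.dom, ∀ v ∈ M.dom, (M.rel u v ↔ N.rel (f u) (f v))) ∧
  (∀ u ∈ M.dom, ∀ φ ∈ L.In Θ, (L.Sat M u φ ↔ L.Sat N (f u) φ))

end AbsLogic

/-- An abstract bi-intuitionistic logic extending `BIL`: bi-intuitionistic
formulas are present in it in their usual form and with their usual meaning. -/
structure BILExtension (A : Type) extends AbsLogic A where
  ofBIL : BILForm A → F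
  ofBIL_mem : ∀ (Θ : Set A) (φ : BILForm A), φ.letters ⊆ Θ → ofBIL φ ∈ In Θ
  ofBIL_bot : ofBIL .bot = fbot
  ofBIL_conj : ∀ φ ψ, ofBIL (.conj φ ψ) = fconj (ofBIL φ) (ofBIL ψ)
  ofBIL_disj : ∀ φ ψ, ofBIL (.disj φ ψ) = fdisj (ofBIL φ) (ofBIL ψ)
  ofBIL_impl : ∀ φ ψ, ofBIL (.impl φ ψ) = fimpl (ofBIL φ) (ofBIL ψ)
  ofBIL_coimpl : ∀ φ ψ, ofBIL (.coimpl φ ψ) = fcoimpl (ofBIL φ) (ofBIL ψ)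
  sat_ofBIL : ∀ {Ω : Type} (M : SKModel A Ω) (w : Ω) (φ : BILForm A),
      Sat M w (ofBIL φ) ↔ BILSat M φ w

/-! ### Bi-unravellings -/

/-- The universe `W^un_w` of the bi-unravelling of `M` around `w`: finite
nonempty sequences starting at `w` whose consecutive elements are
`≺`- or `≻`-related and distinct. -/
def unravDom {A Ω : Type} (M : SKModel A Ω) (w : Ω) : Set (List Ω) :=
  {l | l ≠ [] ∧ l.head? = some w ∧ (∀ x ∈ l, x ∈ M.dom) ∧
    l.Chain' (fun u v => (M.rel u v ∨ M.rel v u) ∧ u ≠ v)}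

/-- The one-step relation `ρ^un_w` of the bi-unravelling. -/
def unravStep {A Ω : Type} (M : SKModel A Ω) (w : Ω) (s t : List Ω) : Prop :=
  s ∈ unravDom M w ∧ t ∈ unravDom M w ∧
    ((∃ x y, s.getLast? = some y ∧ t = s ++ [x] ∧ M.rel y x) ∨
     (∃ x y, t.getLast? = some y ∧ s = t ++ [x] ∧ M.rel x y))

/-- The accessibility relation `≺^un_w` of the bi-unravelling: the reflexive
and transitive closure of `ρ^un_w`. -/
def unravRel {A Ω : Type} (M : SKModel A Ω) (w : Ω) : List Ω → List Ω → Prop :=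
  Relation.ReflTransGen (unravStep M w)

/-- The valuation `V^un_w` of the bi-unravelling: a sequence satisfies a
letter iff its last element does. -/
def unravVal {A Ω : Type} (M : SKModel A Ω) (w : Ω) (p : A) : Set (List Ω) :=
  {l | l ∈ unravDom M w ∧ ∃ y, l.getLast? = some y ∧ y ∈ M.val p}

/-- `U` is (a presentation of) the bi-unravelling `M^un_w` of `M` around `w`. -/
def IsUnravelling {A Ω : Type} (M : SKModel A Ω) (w : Ω) (U : SKModel A (List Ω)) : Prop :=
  U.dom = unravDom M w ∧
  (∀ α β, U.rel α β ↔ (α ∈ unravDom M w ∧ β ∈ unravDom M w ∧ unravRel M w α β)) ∧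
  (∀ p, U.val p = unravVal M w p)

/-- `M` is a bi-unravelled model presented in the canonical form: its frame is
literally the bi-unravelling frame of `M₀` around `w₀` (the valuation of `M`
is arbitrary). -/
def IsBiUnravelledForm {A Ω : Type} (M₀ : SKModel A Ω) (w₀ : Ω)
    (M : SKModel A (List Ω)) : Prop :=
  M.dom = unravDom M₀ w₀ ∧
  (∀ α β, M.rel α β ↔ (α ∈ unravDom M₀ w₀ ∧ β ∈ unravDom M₀ w₀ ∧ unravRel M₀ w₀ α β))

/-- `(N,v)` is a bi-unravelled pointed model: its underlying frame is
isomorphic, via a point-preserving order-respecting bijection, to the frame of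
some bi-unravelling. -/
def IsBiUnravelled {A Ω' : Type} (N : SKModel A Ω') (v : Ω') : Prop :=
  ∃ (Ω₀ : Type) (M₀ : SKModel A Ω₀) (w₀ : Ω₀), w₀ ∈ M₀.dom ∧
    ∃ g : Ω' → List Ω₀, Set.InjOn g N.dom ∧ g '' N.dom = unravDom M₀ w₀ ∧ g v = [w₀] ∧
      ∀ x ∈ N.dom, ∀ y ∈ N.dom, (N.rel x y ↔ unravRel M₀ w₀ (g x) (g y))

/-- `qp` and `qm` provide the fresh letters `q⁺_α`, `q⁻_α` (for `α ∈ D`)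
used to form the signature `Θ_M`. -/
def FreshLetters {A Ω : Type} (Θ : Set A) (D : Set Ω) (qp qm : Ω → A) : Prop :=
  Set.InjOn qp D ∧ Set.InjOn qm D ∧
  (∀ α ∈ D, qp α ∉ Θ) ∧ (∀ α ∈ D, qm α ∉ Θ) ∧
  (∀ α ∈ D, ∀ β ∈ D, qp α ≠ qm β)

/-- The signature `Θ_M = Θ ∪ {q⁺_α, q⁻_α : α ∈ D}`. -/
def bracketSig {A Ω : Type} (Θ : Set A) (D : Set Ω) (qp qm : Ω → A) : Set A :=
  Θ ∪ qp '' D ∪ qm '' D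

/-- `Mb` is the model `[M]`: same frame as `M`, same valuation on `Θ`, and
`β ∈ [V](q⁺_α) ↔ α ≺ β`, `β ∉ [V](q⁻_α) ↔ β ≺ α`. -/
def IsBracket {A Ω : Type} (Θ : Set A) (qp qm : Ω → A) (M Mb : SKModel A Ω) : Prop :=
  Mb.dom = M.dom ∧ (∀ u v, Mb.rel u v ↔ M.rel u v) ∧
  (∀ p ∈ Θ, Mb.val p = M.val p) ∧
  (∀ α ∈ M.dom, Mb.val (qp α) = {β | M.rel α β}) ∧
  (∀ α ∈ M.dom, Mb.val (qm α) = {β | β ∈ M.dom ∧ ¬ M.rel β α})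

/-! ### Formula schemas -/

/-- Binary formula schemas: expressions built from two placeholders and
propositional letters by `→` and `≪`. -/
inductive BILSchema (A : Type) : Type
  | v1 : BILSchema A
  | v2 : BILSchema A
  | atom : A → BILSchema A
  | impl : BILSchema A → BILSchema A → BILSchema A
  | coimpl : BILSchema A → BILSchema A → BILSchema A

namespace BILSchema

/-- The letters occurring in a schema. -/
def letters {A : Type} : BILSchema A → Set A
  | v1 => ∅
  | v2 => ∅
  | atom p => {p}
  | impl s t => letters s ∪ letters t
  | coimpl s t => letters s ∪ letters t

/-- Evaluation of a schema in an abstract logic `L` extending `BIL`, on a pair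
of `L`-formulas. -/
def eval {A : Type} (L : BILExtension A) : BILSchema A → L.F → L.F → L.F
  | v1, α, _ => α
  | v2, _, β => β
  | atom p, _, _ => L.ofBIL (.atom p)
  | impl s t, α, β => L.fimpl (eval L s α β) (eval L t α β)
  | coimpl s t, α, β => L.fcoimpl (eval L s α β) (eval L t α β)

end BILSchema

/-- `signSat b P` says that `P` holds if the sign `b` is `+` (`true`), and
that `P` fails if the sign is `−` (`false`). -/
def signSat (b : Bool) (P : Prop) : Prop := if b then P else ¬ P

/-- Iterated conjunction, with `⋀ ∅ := ⊥ → ⊥`. -/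
def bigConj {A : Type} : List (BILForm A) → BILForm A
  | [] => .impl .bot .bot
  | φ :: l => .conj φ (bigConj l)

/-- Iterated disjunction, with `⋁ ∅ := ⊥`. -/
def bigDisj {A : Type} : List (BILForm A) → BILForm A
  | [] => .bot
  | φ :: l => .disj φ (bigDisj l)

/-- `N` realizes (over the signature `Θ`) every BIL-type of its submodel `M`. -/
def BILRealizesTypesIn {A Ω : Type} (Θ : Set A) (M N : SKModel A Ω) : Prop :=
  ∀ v ∈ M.dom, ∀ Γ Δ : Set (BILForm A),
    (BILSuccType Θ M v Γ Δ → ∃ u, N.rel v u ∧ BILSatTh N u Γ Δ) ∧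
    (BILPredType Θ M v Γ Δ → ∃ u, N.rel u v ∧ BILSatTh N u Γ Δ)

/-- BIL-formulas are preserved under bi-asimulations: if
`A'` is a bi-asimulation from `(M₁,w₁)` to `(M₂,w₂)` over the signature `Θ`,
then `Th⁺_BIL(M₁,w₁) ⊆ Th⁺_BIL(M₂,w₂)`. -/
theorem bil_preservation (A : Type) (Θ : Set A) (Ω₁ Ω₂ : Type)
    (M₁ : SKModel A Ω₁) (M₂ : SKModel A Ω₂) (w₁ : Ω₁) (w₂ : Ω₂)
    (R : Ω₁ → Ω₂ → Prop) (S : Ω₂ → Ω₁ → Prop)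
    (hasim : IsBiAsim Θ M₁ M₂ w₁ w₂ R S) :
    ∀ φ : BILForm A, φ.letters ⊆ Θ → BILSat M₁ φ w₁ → BILSat M₂ φ w₂ := by
  suffices h : ∀ φ : BILForm A, φ.letters ⊆ Θ →
      (∀ v s, R v s → BILSat M₁ φ v → BILSat M₂ φ s) ∧
      (∀ v s, S v s → BILSat M₂ φ v → BILSat M₁ φ s) by
    intro φ hφ; exact (h φ hφ).1 w₁ w₂ hasim.elem
  intro φ
  induction φ with
  | bot => exact fun _ => ⟨fun _ _ _ h => h.elim, fun _ _ _ h => h.elim⟩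
  | atom p =>
    intro hl
    have hp : p ∈ Θ := hl (by simp [BILForm.letters])
    exact ⟨fun v s hr h => hasim.atomR p hp hr h,
           fun v s hsrel h => hasim.atomS p hp hsrel h⟩
  | conj φ ψ ihφ ihψ =>
    intro hl
    have hφ := Set.union_subset_iff.mp hl
    refine ⟨fun v s hr h => ⟨(ihφ hφ.1).1 v s hr h.1, (ihψ hφ.2).1 v s hr h.2⟩,
      fun v s hr h => ⟨(ihφ hφ.1).2 v s hr h.1, (ihψ hφ.2).2 v s hr h.2⟩⟩
  | disj φ ψ ihφ ihψ =>
    intro hl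
    have hφ := Set.union_subset_iff.mp hl
    refine ⟨fun v s hr h => h.imp ((ihφ hφ.1).1 v s hr) ((ihψ hφ.2).1 v s hr),
      fun v s hr h => h.imp ((ihφ hφ.1).2 v s hr) ((ihψ hφ.2).2 v s hr)⟩
  | impl φ ψ ihφ ihψ =>
    intro hl
    have hsub := Set.union_subset_iff.mp hl
    constructor
    · intro v s hr h t hst hφt
      obtain ⟨u, huv, hStu, hRut⟩ := hasim.backR hr hst
      exact (ihψ hsub.2).1 u t hRut (h u huv ((ihφ hsub.1).2 t u hStu hφt))
    · intro v s hrel h t hst hφt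
      obtain ⟨u, huv, hRtu, hSut⟩ := hasim.backS hrel hst
      exact (ihψ hsub.2).2 u t hSut (h u huv ((ihφ hsub.1).1 t u hRtu hφt))
  | coimpl φ ψ ihφ ihψ =>
    intro hl
    have hsub := Set.union_subset_iff.mp hl
    constructor
    · intro v s hr ⟨u, huv, hφu, hψu⟩
      obtain ⟨t, hts, hStu, hRut⟩ := hasim.forthR hr huv
      exact ⟨t, hts, (ihφ hsub.1).1 u t hRut hφu,
        fun hψt => hψu ((ihψ hsub.2).2 t u hStu hψt)⟩
    · intro v s hrel ⟨u, huv, hφu, hψu⟩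
      obtain ⟨t, hts, hRtu, hSut⟩ := hasim.forthS hrel huv
      exact ⟨t, hts, (ihφ hsub.1).2 u t hSut hφu,
        fun hψt => hψu ((ihψ hsub.2).1 t u hRtu hψt)⟩
end

section
/- BIL has the Tarski Union Property: if M₀ ≼_BIL M₁ ≼_BIL … ≼_BIL Mₙ ≼_BIL … is a countable BIL-elementary chain of Θ-models, then Mₙ ≼_BIL ∪_{k∈ω} M_k for all n; in particular, for every φ ∈ BIL(Θ), every n ∈ ω and every w ∈ Wₙ, Mₙ,w ⊨_BIL φ iff ∪_{k∈ω}M_k, w ⊨_BIL φ. -/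
section TUPAux

variable {A : Type} {Θ : Set A} {Ω : Type} {Mc : ℕ → SKModel A Ω}

lemma chain_dom_mono (hchain : ∀ n, BILElemSub Θ (Mc n) (Mc (n + 1)))
    {m n : ℕ} (h : m ≤ n) : (Mc m).dom ⊆ (Mc n).dom := by
  induction n with
  | zero =>
    have : m = 0 := Nat.le_zero.mp h
    subst this; exact fun x hx => hx
  | succ n ih =>
    rcases Nat.lt_or_ge m (n + 1) with h' | h'
    · exact fun x hx => (hchain n).1.1 (ih (Nat.lt_succ_iff.mp h') hx)
    · have : m = n + 1 := le_antisymm h h'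
      subst this; exact fun x hx => hx

lemma chain_rel (hchain : ∀ n, BILElemSub Θ (Mc n) (Mc (n + 1)))
    {m n : ℕ} (h : m ≤ n) {u v : Ω}
    (hu : u ∈ (Mc m).dom) (hv : v ∈ (Mc m).dom) :
    (Mc m).rel u v ↔ (Mc n).rel u v := by
  induction n with
  | zero =>
    have : m = 0 := Nat.le_zero.mp h
    subst this; rfl
  | succ n ih =>
    rcases Nat.lt_or_ge m (n + 1) with h' | h'
    · have hmn := Nat.lt_succ_iff.mp h'
      have hu' := chain_dom_mono hchain hmn hu
      have hv' := chain_dom_mono hchain hmn hv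
      exact (ih hmn).trans ((hchain n).1.2.1 u hu' v hv')
    · have : m = n + 1 := le_antisymm h h'
      subst this; rfl

lemma chain_val (hchain : ∀ n, BILElemSub Θ (Mc n) (Mc (n + 1)))
    {m n : ℕ} (h : m ≤ n) {w : Ω} (hw : w ∈ (Mc m).dom) (p : A) :
    (w ∈ (Mc m).val p ↔ w ∈ (Mc n).val p) := by
  induction n with
  | zero =>
    have : m = 0 := Nat.le_zero.mp h
    subst this; rfl
  | succ n ih =>
    rcases Nat.lt_or_ge m (n + 1) with h' | h'
    · have hmn := Nat.lt_succ_iff.mp h'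
      have hw' := chain_dom_mono hchain hmn hw
      have hval := (hchain n).1.2.2 p
      refine (ih hmn).trans ?_
      constructor
      · intro hx
        have : w ∈ (Mc (n + 1)).val p ∩ (Mc n).dom := hval ▸ hx
        exact this.1
      · intro hx
        have : w ∈ (Mc (n + 1)).val p ∩ (Mc n).dom := ⟨hx, hw'⟩
        exact hval ▸ this
    · have : m = n + 1 := le_antisymm h h'
      subst this; rfl

lemma chain_sat (hchain : ∀ n, BILElemSub Θ (Mc n) (Mc (n + 1)))
    {m n : ℕ} (h : m ≤ n) {w : Ω} (hw : w ∈ (Mc m).dom)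
    {φ : BILForm A} (hφ : φ.letters ⊆ Θ) :
    (BILSat (Mc m) φ w ↔ BILSat (Mc n) φ w) := by
  induction n with
  | zero =>
    have : m = 0 := Nat.le_zero.mp h
    subst this; rfl
  | succ n ih =>
    rcases Nat.lt_or_ge m (n + 1) with h' | h'
    · have hmn := Nat.lt_succ_iff.mp h'
      have hw' := chain_dom_mono hchain hmn hw
      exact (ih hmn).trans ((hchain n).2 w hw' φ hφ)
    · have : m = n + 1 := le_antisymm h h'
      subst this; rfl

lemma union_val (hchain : ∀ n, BILElemSub Θ (Mc n) (Mc (n + 1)))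
    {U : SKModel A Ω} (hU : IsUnionOfChain Mc U)
    {n : ℕ} {w : Ω} (hw : w ∈ (Mc n).dom) (p : A) :
    (w ∈ U.val p ↔ w ∈ (Mc n).val p) := by
  rw [hU.2.2 p]
  constructor
  · intro hx
    rcases Set.mem_iUnion.mp hx with ⟨m, hm⟩
    have hwm : w ∈ (Mc m).dom := (Mc m).val_mem p hm
    have hN : w ∈ (Mc (max m n)).val p :=
      (chain_val hchain (le_max_left m n) hwm p).mp hm
    exact (chain_val hchain (le_max_right m n) hw p).mpr hN
  · intro hx
    exact Set.mem_iUnion.mpr ⟨n, hx⟩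

lemma union_rel (hchain : ∀ n, BILElemSub Θ (Mc n) (Mc (n + 1)))
    {U : SKModel A Ω} (hU : IsUnionOfChain Mc U)
    {n : ℕ} {u v : Ω} (hu : u ∈ (Mc n).dom) (hv : v ∈ (Mc n).dom) :
    (U.rel u v ↔ (Mc n).rel u v) := by
  rw [hU.2.1 u v]
  constructor
  · rintro ⟨m, hm⟩
    have hN : (Mc (max m n)).rel u v :=
      (chain_rel hchain (le_max_left m n) ((Mc m).rel_mem hm).1
        ((Mc m).rel_mem hm).2).mp hm
    exact (chain_rel hchain (le_max_right m n) hu hv).mpr hN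
  · intro hx
    exact ⟨n, hx⟩

lemma union_sat (hchain : ∀ n, BILElemSub Θ (Mc n) (Mc (n + 1)))
    {U : SKModel A Ω} (hU : IsUnionOfChain Mc U) :
    ∀ φ : BILForm A, φ.letters ⊆ Θ → ∀ n, ∀ w ∈ (Mc n).dom,
      (BILSat (Mc n) φ w ↔ BILSat U φ w) := by
  intro φ
  induction φ with
  | bot => intro _ n w hw; exact Iff.rfl
  | atom p =>
    intro _ n w hw
    exact (union_val hchain hU hw p).symm
  | conj φ ψ ihφ ihψ =>
    intro hl n w hw
    have h1 : φ.letters ⊆ Θ := fun x hx => hl (Or.inl hx)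
    have h2 : ψ.letters ⊆ Θ := fun x hx => hl (Or.inr hx)
    exact and_congr (ihφ h1 n w hw) (ihψ h2 n w hw)
  | disj φ ψ ihφ ihψ =>
    intro hl n w hw
    have h1 : φ.letters ⊆ Θ := fun x hx => hl (Or.inl hx)
    have h2 : ψ.letters ⊆ Θ := fun x hx => hl (Or.inr hx)
    exact or_congr (ihφ h1 n w hw) (ihψ h2 n w hw)
  | impl φ ψ ihφ ihψ =>
    intro hl n w hw
    have h1 : φ.letters ⊆ Θ := fun x hx => hl (Or.inl hx)
    have h2 : ψ.letters ⊆ Θ := fun x hx => hl (Or.inr hx)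
    constructor
    · intro h v hrel hsat
      rcases (hU.2.1 w v).mp hrel with ⟨m, hm⟩
      set N := max m n with hNdef
      have hvm : v ∈ (Mc m).dom := ((Mc m).rel_mem hm).2
      have hwm : w ∈ (Mc m).dom := ((Mc m).rel_mem hm).1
      have hvN : v ∈ (Mc N).dom := chain_dom_mono hchain (le_max_left m n) hvm
      have hwN : w ∈ (Mc N).dom := chain_dom_mono hchain (le_max_left m n) hwm
      have hrelN : (Mc N).rel w v :=
        (chain_rel hchain (le_max_left m n) hwm hvm).mp hm
      have hN : BILSat (Mc N) (BILForm.impl φ ψ) w :=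
        (chain_sat hchain (le_max_right m n) hw hl).mp h
      have hsatN : BILSat (Mc N) φ v := (ihφ h1 N v hvN).mpr hsat
      exact (ihψ h2 N v hvN).mp (hN v hrelN hsatN)
    · intro h v hrel hsat
      have hv : v ∈ (Mc n).dom := ((Mc n).rel_mem hrel).2
      have hrelU : U.rel w v := (hU.2.1 w v).mpr ⟨n, hrel⟩
      have hsatU : BILSat U φ v := (ihφ h1 n v hv).mp hsat
      exact (ihψ h2 n v hv).mpr (h v hrelU hsatU)
  | coimpl φ ψ ihφ ihψ =>
    intro hl n w hw
    have h1 : φ.letters ⊆ Θ := fun x hx => hl (Or.inl hx)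
    have h2 : ψ.letters ⊆ Θ := fun x hx => hl (Or.inr hx)
    constructor
    · rintro ⟨v, hrel, hsφ, hsψ⟩
      have hv : v ∈ (Mc n).dom := ((Mc n).rel_mem hrel).1
      refine ⟨v, (hU.2.1 v w).mpr ⟨n, hrel⟩, (ihφ h1 n v hv).mp hsφ,
        fun hc => hsψ ((ihψ h2 n v hv).mpr hc)⟩
    · rintro ⟨v, hrel, hsφ, hsψ⟩
      rcases (hU.2.1 v w).mp hrel with ⟨m, hm⟩
      set N := max m n with hNdef
      have hvm : v ∈ (Mc m).dom := ((Mc m).rel_mem hm).1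
      have hwm : w ∈ (Mc m).dom := ((Mc m).rel_mem hm).2
      have hvN : v ∈ (Mc N).dom := chain_dom_mono hchain (le_max_left m n) hvm
      have hrelN : (Mc N).rel v w :=
        (chain_rel hchain (le_max_left m n) hvm hwm).mp hm
      have hN : BILSat (Mc N) (BILForm.coimpl φ ψ) w :=
        ⟨v, hrelN, (ihφ h1 N v hvN).mpr hsφ,
          fun hc => hsψ ((ihψ h2 N v hvN).mp hc)⟩
      exact (chain_sat hchain (le_max_right m n) hw hl).mpr hN

end TUPAux

/-- BIL has the Tarski Union Property: if
`M₀ ≼_BIL M₁ ≼_BIL …` is a countable BIL-elementary chain of `Θ`-models and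
`U` is its union, then `Mₙ ≼_BIL U` for all `n`; in particular every
`BIL(Θ)`-formula has the same truth value at `(Mₙ,w)` and `(U,w)` for every
`w ∈ Wₙ`. -/
theorem bil_tup (A : Type) (Θ : Set A) (Ω : Type) (Mc : ℕ → SKModel A Ω)
    (hchain : ∀ n, BILElemSub Θ (Mc n) (Mc (n + 1)))
    (U : SKModel A Ω) (hU : IsUnionOfChain Mc U) :
    ∀ n, BILElemSub Θ (Mc n) U ∧
      ∀ w ∈ (Mc n).dom, ∀ φ : BILForm A, φ.letters ⊆ Θ →
        (BILSat (Mc n) φ w ↔ BILSat U φ w) := by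
  intro n
  have hsat : ∀ w ∈ (Mc n).dom, ∀ φ : BILForm A, φ.letters ⊆ Θ →
      (BILSat (Mc n) φ w ↔ BILSat U φ w) :=
    fun w hw φ hφ => union_sat hchain hU φ hφ n w hw
  refine ⟨⟨⟨?_, ?_, ?_⟩, hsat⟩, hsat⟩
  · intro x hx
    rw [hU.1]
    exact Set.mem_iUnion.mpr ⟨n, hx⟩
  · intro u hu v hv
    exact (union_rel hchain hU hu hv).symm
  · intro p
    ext x
    constructor
    · intro hx
      exact ⟨(union_val hchain hU ((Mc n).val_mem p hx) p).mpr hx,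
        (Mc n).val_mem p hx⟩
    · rintro ⟨hx, hd⟩
      exact (union_val hchain hU hd p).mp hx
end

section
/- BIL is ★-compact: for any signature Θ, a BIL(Θ)-theory (Γ,Δ) is BIL-satisfiable provided every finite subtheory is, i.e. if for all finite Γ' ⊆ Γ and Δ' ⊆ Δ there is a pointed Θ-model at which every formula of Γ' is true and every formula of Δ' is false, then there is a pointed Θ-model at which every formula of Γ is true and every formula of Δ is false. -/
section Ultra
open Filter
variable {A : Type} {I : Type} (U : Ultrafilter I) (Ω : I → Type) (M : ∀ i, SKModel A (Ω i))

abbrev UProd := (U : Filter I).Product Ω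

variable {U Ω}

def umk (f : ∀ i, Ω i) : UProd U Ω := Quotient.mk (Filter.productSetoid _ Ω) f

lemma lift_prop_congr {p : ∀ i, Ω i → Prop} {f g : ∀ i, Ω i}
    (h : ∀ᶠ i in U, f i = g i) :
    (∀ᶠ i in U, p i (f i)) ↔ (∀ᶠ i in U, p i (g i)) :=
  ⟨fun h' => (h.and h').mono fun _ ⟨he, hp⟩ => he ▸ hp,
   fun h' => (h.and h').mono fun _ ⟨he, hp⟩ => he ▸ hp⟩

variable (U Ω)

def uLift (p : ∀ i, Ω i → Prop) : UProd U Ω → Prop :=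
  fun x => Quotient.liftOn x (fun f => ∀ᶠ i in U, p i (f i))
    (fun _ _ h => propext (lift_prop_congr h))

@[simp] lemma uLift_mk (p : ∀ i, Ω i → Prop) (f : ∀ i, Ω i) :
    uLift U Ω p (umk f) ↔ ∀ᶠ i in U, p i (f i) := Iff.rfl

def uLift₂ (p : ∀ i, Ω i → Ω i → Prop) : UProd U Ω → UProd U Ω → Prop :=
  fun x y => Quotient.liftOn₂ x y (fun f g => ∀ᶠ i in U, p i (f i) (g i))
    (fun f₁ g₁ f₂ g₂ h1 h2 => propext (by
      constructor
      · intro h'; exact ((h1.and h2).and h').mono fun _ ⟨⟨e1, e2⟩, hp⟩ => e1 ▸ e2 ▸ hp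
      · intro h'; exact ((h1.and h2).and h').mono fun _ ⟨⟨e1, e2⟩, hp⟩ => e1 ▸ e2 ▸ hp))

@[simp] lemma uLift₂_mk (p : ∀ i, Ω i → Ω i → Prop) (f g : ∀ i, Ω i) :
    uLift₂ U Ω p (umk f) (umk g) ↔ ∀ᶠ i in U, p i (f i) (g i) := Iff.rfl

def UModel : SKModel A (UProd U Ω) where
  dom := uLift U Ω (fun i v => v ∈ (M i).dom)
  nonempty := by
    refine ⟨umk (fun i => ((M i).nonempty).choose), ?_⟩
    exact Eventually.of_forall fun i => ((M i).nonempty).choose_spec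
  rel := uLift₂ U Ω (fun i u v => (M i).rel u v)
  rel_mem := by
    intro u v h
    induction u using Quotient.inductionOn with | h f =>
    induction v using Quotient.inductionOn with | h g =>
    exact ⟨h.mono fun i hi => ((M i).rel_mem hi).1, h.mono fun i hi => ((M i).rel_mem hi).2⟩
  rel_refl := by
    intro u hu
    induction u using Quotient.inductionOn with | h f =>
    exact hu.mono fun i hi => (M i).rel_refl _ hi
  rel_trans := by
    intro u v w h1 h2
    induction u using Quotient.inductionOn with | h f =>
    induction v using Quotient.inductionOn with | h g =>
    induction w using Quotient.inductionOn with | h k =>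
    exact (h1.and h2).mono fun i ⟨a, b⟩ => (M i).rel_trans a b
  rel_antisymm := by
    intro u v h1 h2
    induction u using Quotient.inductionOn with | h f =>
    induction v using Quotient.inductionOn with | h g =>
    exact Quotient.sound ((h1.and h2).mono fun i ⟨a, b⟩ => (M i).rel_antisymm a b)
  val p := uLift U Ω (fun i v => v ∈ (M i).val p)
  val_mem := by
    intro p x hx
    induction x using Quotient.inductionOn with | h f =>
    exact hx.mono fun i hi => (M i).val_mem p hi
  val_mono := by
    intro p u v h hu
    induction u using Quotient.inductionOn with | h f =>
    induction v using Quotient.inductionOn with | h g =>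
    exact (h.and hu).mono fun i ⟨a, b⟩ => (M i).val_mono p a b

lemma umodel_rel_mk (f g : ∀ i, Ω i) :
    (UModel U Ω M).rel (umk f) (umk g) ↔ ∀ᶠ i in U, (M i).rel (f i) (g i) := Iff.rfl

theorem los (φ : BILForm A) (f : ∀ i, Ω i) :
    BILSat (UModel U Ω M) φ (umk f) ↔ ∀ᶠ i in U, BILSat (M i) φ (f i) := by
  induction φ generalizing f with
  | bot =>
    simp only [BILSat, false_iff]
    intro h
    exact U.neBot.ne (Filter.eventually_false_iff_eq_bot.mp h)
  | atom p => exact Iff.rfl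
  | conj φ ψ ihφ ihψ =>
    simp only [BILSat, ihφ, ihψ, eventually_and]
  | disj φ ψ ihφ ihψ =>
    simp only [BILSat, ihφ, ihψ, Ultrafilter.eventually_or]
  | impl φ ψ ihφ ihψ =>
    constructor
    · intro h
      by_contra hne
      rw [← Ultrafilter.eventually_not] at hne
      classical
      have hch : ∀ i, ¬ (BILSat (M i) (.impl φ ψ) (f i)) →
          ∃ v, (M i).rel (f i) v ∧ BILSat (M i) φ v ∧ ¬ BILSat (M i) ψ v := by
        intro i hi
        simp only [BILSat] at hi
        push_neg at hi
        exact hi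
      set g : ∀ i, Ω i := fun i =>
        if hcond : ∃ v, (M i).rel (f i) v ∧ BILSat (M i) φ v ∧ ¬ BILSat (M i) ψ v
        then hcond.choose else f i with hg
      have hgood : ∀ᶠ i in U, (M i).rel (f i) (g i) ∧ BILSat (M i) φ (g i)
          ∧ ¬ BILSat (M i) ψ (g i) := by
        refine hne.mono fun i hi => ?_
        have hcond := hch i hi
        simp only [hg, dif_pos hcond]
        exact hcond.choose_spec
      have hrel : (UModel U Ω M).rel (umk f) (umk g) := hgood.mono fun i hi => hi.1
      have hφg : BILSat (UModel U Ω M) φ (umk g) :=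
        (ihφ g).2 (hgood.mono fun i hi => hi.2.1)
      have hψg := h (umk g) hrel hφg
      have := (ihψ g).1 hψg
      have hcontra := (this.and hgood).exists
      obtain ⟨i, hi1, _, _, hi2⟩ := hcontra
      exact hi2 hi1
    · intro h v hrel hφv
      induction v using Quotient.inductionOn with | h g =>
      have hφg := (ihφ g).1 hφv
      refine (ihψ g).2 ?_
      exact ((h.and hrel).and hφg).mono fun i ⟨⟨hi, hr⟩, hp⟩ => hi _ hr hp
  | coimpl φ ψ ihφ ihψ =>
    constructor
    · intro h
      obtain ⟨v, hrel, hφv, hψv⟩ := h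
      induction v using Quotient.inductionOn with | h g =>
      have hφg := (ihφ g).1 hφv
      have hψg : ∀ᶠ i in U, ¬ BILSat (M i) ψ (g i) := by
        rw [Ultrafilter.eventually_not]
        exact fun hc => hψv ((ihψ g).2 hc)
      exact ((hrel.and hφg).and hψg).mono fun i ⟨⟨hr, hp⟩, hn⟩ => ⟨g i, hr, hp, hn⟩
    · intro h
      classical
      set g : ∀ i, Ω i := fun i =>
        if hcond : ∃ v, (M i).rel v (f i) ∧ BILSat (M i) φ v ∧ ¬ BILSat (M i) ψ v
        then hcond.choose else f i with hg
      have hgood : ∀ᶠ i in U, (M i).rel (g i) (f i) ∧ BILSat (M i) φ (g i)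
          ∧ ¬ BILSat (M i) ψ (g i) := by
        refine h.mono fun i hi => ?_
        obtain ⟨v, hv⟩ := hi
        have hcond : ∃ v, (M i).rel v (f i) ∧ BILSat (M i) φ v ∧ ¬ BILSat (M i) ψ v := ⟨v, hv⟩
        simp only [hg, dif_pos hcond]
        exact hcond.choose_spec
      refine ⟨umk g, hgood.mono fun i hi => hi.1, (ihφ g).2 (hgood.mono fun i hi => hi.2.1), ?_⟩
      intro hc
      have := (ihψ g).1 hc
      obtain ⟨i, h1, _, _, h2⟩ := (this.and hgood).exists
      exact h2 h1

end Ultra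

/-- Index type for the ultraproduct construction: pairs of finite subtheories. -/
def CompactIdx {A : Type} (Γ Δ : Set (BILForm A)) : Type :=
  {p : Finset (BILForm A) × Finset (BILForm A) // ↑p.1 ⊆ Γ ∧ ↑p.2 ⊆ Δ}

instance {A : Type} (Γ Δ : Set (BILForm A)) : Nonempty (CompactIdx Γ Δ) :=
  ⟨⟨(∅, ∅), by simp⟩⟩

noncomputable instance {A : Type} (Γ Δ : Set (BILForm A)) :
    SemilatticeSup (CompactIdx Γ Δ) := by
  classical
  exact
  { le := fun a b => a.1.1 ⊆ b.1.1 ∧ a.1.2 ⊆ b.1.2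
    le_refl := fun a => ⟨subset_rfl, subset_rfl⟩
    le_trans := fun a b c h1 h2 => ⟨h1.1.trans h2.1, h1.2.trans h2.2⟩
    le_antisymm := fun a b h1 h2 => Subtype.ext (Prod.ext
      (subset_antisymm h1.1 h2.1) (subset_antisymm h1.2 h2.2))
    sup := fun a b => ⟨(a.1.1 ∪ b.1.1, a.1.2 ∪ b.1.2),
      ⟨by simp only [Finset.coe_union]; exact Set.union_subset a.2.1 b.2.1,
       by simp only [Finset.coe_union]; exact Set.union_subset a.2.2 b.2.2⟩⟩
    le_sup_left := fun a b => ⟨Finset.subset_union_left, Finset.subset_union_left⟩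
    le_sup_right := fun a b => ⟨Finset.subset_union_right, Finset.subset_union_right⟩
    sup_le := fun a b c h1 h2 => ⟨Finset.union_subset h1.1 h2.1,
      Finset.union_subset h1.2 h2.2⟩ }

/-- BIL is ★-compact: a `BIL(Θ)`-theory `(Γ,Δ)` is
BIL-satisfiable provided all its finite subtheories are. -/
theorem bil_star_compactness (A : Type) (Θ : Set A) (Γ Δ : Set (BILForm A))
    (hΓ : ∀ φ ∈ Γ, BILForm.letters φ ⊆ Θ) (hΔ : ∀ φ ∈ Δ, BILForm.letters φ ⊆ Θ)
    (hfin : ∀ Γ' ⊆ Γ, ∀ Δ' ⊆ Δ, Γ'.Finite → Δ'.Finite →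
      ∃ (Ω : Type) (M : SKModel A Ω) (w : Ω), w ∈ M.dom ∧ BILSatTh M w Γ' Δ') :
    ∃ (Ω : Type) (M : SKModel A Ω) (w : Ω), w ∈ M.dom ∧ BILSatTh M w Γ Δ := by
  classical
  have hex : ∀ i : CompactIdx Γ Δ, ∃ (Ω : Type) (M : SKModel A Ω) (w : Ω),
      w ∈ M.dom ∧ BILSatTh M w ↑i.1.1 ↑i.1.2 :=
    fun i => hfin _ i.2.1 _ i.2.2 (Finset.finite_toSet _) (Finset.finite_toSet _)
  choose Ω M w hw hsat using hex
  let U : Ultrafilter (CompactIdx Γ Δ) := Ultrafilter.of Filter.atTop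
  have hU : (U : Filter (CompactIdx Γ Δ)) ≤ Filter.atTop := Ultrafilter.of_le _
  refine ⟨UProd U Ω, UModel U Ω M, umk w, ?_, ?_, ?_⟩
  · exact Filter.Eventually.of_forall hw
  · intro φ hφ
    rw [los]
    have key : ∀ᶠ i in (Filter.atTop : Filter (CompactIdx Γ Δ)),
        BILSat (M i) φ (w i) := by
      refine Filter.eventually_atTop.2 ⟨⟨({φ}, ∅), by simpa using hφ⟩, fun i hi => ?_⟩
      exact (hsat i).1 φ (Finset.mem_coe.2 (hi.1 (Finset.mem_singleton_self φ)))
    exact hU key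
  · intro φ hφ
    rw [los, ← Ultrafilter.eventually_not]
    have key : ∀ᶠ i in (Filter.atTop : Filter (CompactIdx Γ Δ)),
        ¬ BILSat (M i) φ (w i) := by
      refine Filter.eventually_atTop.2 ⟨⟨(∅, {φ}), by simpa using hφ⟩, fun i hi => ?_⟩
      exact (hsat i).2 φ (Finset.mem_coe.2 (hi.2 (Finset.mem_singleton_self φ)))
    exact hU key
end
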